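/- Let f(z) be a W-invariant polynomial in z_1,…,z_n (W the parity-preserving permutation group) and suppose f = g^+ + e·h where e(z) := ∏_{i : n−i even} z_i, g is a W'-invariant polynomial in n−1 variables pulled back via the elementary semisymmetric generators, and h is W-invariant. Then this decomposition is unique, and deg g ≤ deg f, deg h ≤ deg f − ⌈n/2⌉. -/

import Mathlib

open Finset MvPolynomial

/-- A permutation of `{1,…,n}` is parity preserving (`π(i) ≡ i mod 2`). -/
def ParityPerm {n : ℕ} (π : Equiv.Perm (Fin n)) : Prop :=
  ∀ i : Fin n, ((π i : ℕ)) % 2 = (i : ℕ) % 2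

variable (k : Type*) [Field k] [CharZero k] (n : ℕ)

/-- Elementary symmetric polynomial of degree `m` in the variables indexed by `S`. -/
noncomputable def esymS (S : Finset (Fin n)) (m : ℕ) : MvPolynomial (Fin n) k :=
  ∑ T ∈ S.powersetCard m, ∏ i ∈ T, X i

/-- Odd-position variables (1-based odd = 0-based even). -/
def oddVars : Finset (Fin n) := Finset.univ.filter (fun i => Even (i : ℕ))

/-- Even-position variables. -/
def evenVars : Finset (Fin n) := Finset.univ.filter (fun i => Odd (i : ℕ))

/-- `e(z) = ∏_{i : n−i even} z_i` (1-based; 0-based: `i ≡ n−1 mod 2`), of degree `⌈n/2⌉`. -/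
noncomputable def eProd : MvPolynomial (Fin n) k :=
  ∏ i ∈ Finset.univ.filter (fun i : Fin n => (i : ℕ) % 2 = (n - 1) % 2), X i

/-- The subalgebra generated by the elementary semisymmetric generators other than `e`;
this is the image of the ring of invariants in `n−1` variables under `g ↦ g⁺`. -/
noncomputable def lowerInvariants : Subalgebra k (MvPolynomial (Fin n) k) :=
  Algebra.adjoin k
    (({p | ∃ m : ℕ, 1 ≤ m ∧ m ≤ (n + 1) / 2 ∧ p = esymS k n (oddVars n) m} ∪
      {p | ∃ m : ℕ, 1 ≤ m ∧ m ≤ n / 2 ∧ p = esymS k n (evenVars n) m}) \ {eProd k n})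



namespace DecompositionAux
open Finset MvPolynomial

variable {k : Type*} [Field k] {n : ℕ}

lemma esymS_top (S : Finset (Fin n)) : esymS k n S S.card = ∏ i ∈ S, X i := by
  rw [esymS, Finset.powersetCard_self, Finset.sum_singleton]

lemma esymS_homog (S : Finset (Fin n)) (m : ℕ) : (esymS k n S m).IsHomogeneous m := by
  apply IsHomogeneous.sum
  intro T hT
  have := IsHomogeneous.prod T (fun i => (X i : MvPolynomial (Fin n) k)) (fun _ => 1)
    (fun i _ => isHomogeneous_X k i)
  rwa [Finset.sum_const, smul_eq_mul, mul_one, (Finset.mem_powersetCard.1 hT).2] at this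

lemma rename_esymm_subtype (S : Finset (Fin n)) (m : ℕ) :
    rename (Subtype.val : {x // x ∈ S} → Fin n) (esymm {x // x ∈ S} k m) = esymS k n S m := by
  classical
  rw [esymm, map_sum, esymS]
  refine Finset.sum_bij (fun T _ => T.map (Function.Embedding.subtype _)) ?_ ?_ ?_ ?_
  · intro T hT
    rw [Finset.mem_powersetCard] at hT ⊢
    constructor
    · intro x hx
      rcases Finset.mem_map.1 hx with ⟨y, _, rfl⟩
      exact y.2
    · rw [Finset.card_map, hT.2]
  · intro T₁ h₁ T₂ h₂ hEq
    exact Finset.map_injective _ hEq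
  · intro U hU
    rw [Finset.mem_powersetCard] at hU
    refine ⟨U.subtype (· ∈ S), ?_, ?_⟩
    · rw [Finset.mem_powersetCard]
      refine ⟨Finset.subset_univ _, ?_⟩
      rw [Finset.card_subtype, Finset.filter_true_of_mem (fun x hx => hU.1 hx), hU.2]
    · show Finset.map _ (Finset.subtype _ U) = U
      rw [Finset.subtype_map, Finset.filter_true_of_mem (fun x hx => hU.1 hx)]
  · intro T hT
    rw [map_prod, Finset.prod_map]
    exact Finset.prod_congr rfl fun x _ => rename_X _ _

lemma card_filter_mod_range (r : ℕ) (hr : r < 2) :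
    ∀ N : ℕ, (((Finset.range N).filter (fun i => i % 2 = r)).card) = (N + 1 - r) / 2 := by
  intro N
  induction N with
  | zero => interval_cases r <;> simp
  | succ N ih =>
    rw [Finset.range_add_one, Finset.filter_insert]
    by_cases h : N % 2 = r
    · rw [if_pos h, Finset.card_insert_of_notMem (by simp), ih]
      omega
    · rw [if_neg h, ih]
      omega

lemma card_fin_filter {n : ℕ} (P : ℕ → Prop) [DecidablePred P] :
    (Finset.univ.filter (fun i : Fin n => P (i : ℕ))).card = ((Finset.range n).filter P).card := by
  rw [Finset.card_filter, Finset.card_filter]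
  exact Fin.sum_univ_eq_sum_range (fun m => if P m then 1 else 0) n

lemma top_ne (p : MvPolynomial (Fin n) k) (hp : p ≠ 0) :
    homogeneousComponent p.totalDegree p ≠ 0 := by
  obtain ⟨u, hu, hdeg⟩ : ∃ u ∈ p.support, p.totalDegree = u.sum fun _ e => e :=
    Finset.exists_mem_eq_sup _ (support_nonempty.2 hp) _
  intro h0
  have := coeff_homogeneousComponent (σ := Fin n) (R := k) p.totalDegree p u
  rw [h0, coeff_zero] at this
  rw [mem_support_iff] at hu
  apply hu
  have h2 : (if u.degree = p.totalDegree then coeff u p else 0) = 0 := this.symm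
  rwa [if_pos (by rw [hdeg]; rfl)] at h2

lemma homogeneousComponent_mul_left
    {e h : MvPolynomial (Fin n) k} {c : ℕ} (he : e.IsHomogeneous c) (m : ℕ) :
    homogeneousComponent m (e * h) =
      if c ≤ m then e * homogeneousComponent (m - c) h else 0 := by
  conv_lhs => rw [← sum_homogeneousComponent h, Finset.mul_sum, map_sum]
  have key : ∀ i, homogeneousComponent m (e * homogeneousComponent i h)
      = if m = c + i then e * homogeneousComponent i h else 0 := fun i =>
    homogeneousComponent_of_mem ((he.mul (homogeneousComponent_isHomogeneous i h)))
  simp only [key]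
  by_cases hcm : c ≤ m
  · rw [if_pos hcm, Finset.sum_eq_single (m - c)]
    · rw [if_pos (by omega)]
    · intro b _ hb
      rw [if_neg (by omega)]
    · intro hmem
      rw [if_pos (by omega), homogeneousComponent_eq_zero, mul_zero]
      rw [Finset.mem_range] at hmem
      omega
  · rw [if_neg hcm, Finset.sum_eq_zero]
    intro b _
    rw [if_neg (by omega)]

lemma aeval_monomial_homog {ι : Type*}
    (v : ι → MvPolynomial (Fin n) k) (d : ι → ℕ) (hv : ∀ t, (v t).IsHomogeneous (d t))
    (u : ι →₀ ℕ) (r : k) :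
    (aeval v (monomial u r)).IsHomogeneous (u.sum fun t m => d t * m) := by
  rw [aeval_monomial]
  have h1 : (Finsupp.prod u fun t m => v t ^ m).IsHomogeneous (u.sum fun t m => d t * m) := by
    rw [Finsupp.prod, Finsupp.sum]
    exact IsHomogeneous.prod _ _ _ (fun t _ => (hv t).pow _)
  have h2 := (isHomogeneous_C (Fin n) (r : k)).mul h1
  rwa [zero_add, ← algebraMap_eq] at h2

lemma range_comp {ι : Type*}
    (v : ι → MvPolynomial (Fin n) k) (d : ι → ℕ) (hv : ∀ t, (v t).IsHomogeneous (d t))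
    (p : MvPolynomial (Fin n) k) (hp : p ∈ (aeval v : MvPolynomial ι k →ₐ[k] _).range)
    (m : ℕ) : homogeneousComponent m p ∈ (aeval v : MvPolynomial ι k →ₐ[k] _).range := by
  obtain ⟨P, rfl⟩ := hp
  simp only [AlgHom.toRingHom_eq_coe, RingHom.coe_coe]
  rw [P.as_sum, map_sum (aeval v), map_sum (homogeneousComponent m)]
  apply Subalgebra.sum_mem
  intro u hu
  rw [homogeneousComponent_of_mem (n := u.sum fun t m => d t * m)
    ((mem_homogeneousSubmodule _ _).2 (aeval_monomial_homog v d hv u (coeff u P)))]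
  split
  · exact ⟨monomial u (coeff u P), rfl⟩
  · exact Subalgebra.zero_mem _

noncomputable def esymAH (σ : Type*) [Fintype σ] (R : Type*) [CommSemiring R] (a : ℕ) :
    MvPolynomial (Fin a) R →ₐ[R] MvPolynomial σ R :=
  aeval fun i : Fin a => esymm σ R (i + 1)

lemma esymAH_inj (σ : Type*) [Fintype σ] (R : Type*) [CommRing R] (a : ℕ)
    (h : a ≤ Fintype.card σ) : Function.Injective (esymAH σ R a) := by
  intro p q hpq
  apply esymmAlgHom_injective (R := R) h
  apply Subtype.ext
  rw [esymmAlgHom_apply, esymmAlgHom_apply]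
  exact hpq

set_option maxHeartbeats 1000000 in
lemma theta_inj_card (A B : Finset (Fin n)) (hAB : Disjoint A B) :
    Function.Injective (aeval (Sum.elim (fun i : Fin A.card => esymS k n A ((i : ℕ) + 1))
      (fun i : Fin B.card => esymS k n B ((i : ℕ) + 1))) :
      MvPolynomial (Fin A.card ⊕ Fin B.card) k →ₐ[k] MvPolynomial (Fin n) k) := by
  classical
  have hiota : Function.Injective
      (Sum.elim (Subtype.val : {x // x ∈ A} → Fin n) (Subtype.val : {x // x ∈ B} → Fin n)) := by
    rintro (⟨x, hx⟩ | ⟨x, hx⟩) (⟨y, hy⟩ | ⟨y, hy⟩) hxy <;>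
      simp only [Sum.elim_inl, Sum.elim_inr] at hxy <;> subst hxy
    · rfl
    · exact (Finset.disjoint_left.1 hAB hx hy).elim
    · exact (Finset.disjoint_left.1 hAB hy hx).elim
    · rfl
  let R' := MvPolynomial {x // x ∈ B} k
  let Φ1 := (sumAlgEquiv k (Fin A.card) (Fin B.card)).toAlgHom
  let Φ2 : MvPolynomial (Fin A.card) (MvPolynomial (Fin B.card) k) →ₐ[k]
      MvPolynomial (Fin A.card) R' := mapAlgHom (esymAH {x // x ∈ B} k B.card)
  let Φ3 : MvPolynomial (Fin A.card) R' →ₐ[k] MvPolynomial {x // x ∈ A} R' :=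
    (esymAH {x // x ∈ A} R' A.card).restrictScalars k
  let Φ4 := ((sumAlgEquiv k {x // x ∈ A} {x // x ∈ B}).symm).toAlgHom
  let Φ5 : MvPolynomial ({x // x ∈ A} ⊕ {x // x ∈ B}) k →ₐ[k] MvPolynomial (Fin n) k :=
    rename (Sum.elim Subtype.val Subtype.val)
  have step4l : ∀ m : ℕ, Φ4 (esymm {x // x ∈ A} R' m) =
      rename Sum.inl (esymm {x // x ∈ A} k m) := by
    intro m
    show (sumAlgEquiv k {x // x ∈ A} {x // x ∈ B}).symm _ = _
    rw [AlgEquiv.symm_apply_eq]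
    have h := congrFun (congrArg (DFunLike.coe)
      (sumAlgEquiv_comp_rename_inl k {x // x ∈ A} {x // x ∈ B})) (esymm {x // x ∈ A} k m)
    rw [AlgHom.comp_apply, AlgEquiv.toAlgHom_eq_coe, AlgEquiv.coe_algHom] at h
    rw [h]
    show _ = MvPolynomial.map _ _
    rw [map_esymm]
  have step4r : ∀ q : R', Φ4 (C q) = rename Sum.inr q := by
    intro q
    show (sumAlgEquiv k {x // x ∈ A} {x // x ∈ B}).symm _ = _
    rw [AlgEquiv.symm_apply_eq]
    have h := congrFun (congrArg (DFunLike.coe)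
      (sumAlgEquiv_comp_rename_inr k {x // x ∈ A} {x // x ∈ B})) q
    rw [AlgHom.comp_apply, AlgEquiv.toAlgHom_eq_coe, AlgEquiv.coe_algHom] at h
    rw [h]
    rfl
  have hchain : (aeval (Sum.elim (fun i : Fin A.card => esymS k n A ((i : ℕ) + 1))
      (fun i : Fin B.card => esymS k n B ((i : ℕ) + 1))) :
      MvPolynomial (Fin A.card ⊕ Fin B.card) k →ₐ[k] MvPolynomial (Fin n) k)
      = Φ5.comp (Φ4.comp (Φ3.comp (Φ2.comp Φ1))) := by
    apply MvPolynomial.algHom_ext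
    rintro (i | i) <;>
      simp only [aeval_X, Sum.elim_inl, Sum.elim_inr, AlgHom.comp_apply]
    · have h1 : Φ1 (X (Sum.inl i)) = X i := sumAlgEquiv_X_inl _ _ _ i
      rw [h1]
      have h2 : Φ2 (X i) = X i := by simp [Φ2]
      rw [h2]
      have h3 : Φ3 (X i) = esymm {x // x ∈ A} R' ((i : ℕ) + 1) := by
        show (esymAH {x // x ∈ A} R' A.card) (X i) = _
        rw [esymAH, aeval_X]
      rw [h3, step4l]
      show _ = rename (Sum.elim Subtype.val Subtype.val) (rename Sum.inl _)
      rw [rename_rename, Sum.elim_comp_inl, rename_esymm_subtype]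
    · have h1 : Φ1 (X (Sum.inr i)) = C (X i) := sumAlgEquiv_X_inr _ _ _ i
      rw [h1]
      have h2 : Φ2 (C (X i)) = C (esymm {x // x ∈ B} k ((i : ℕ) + 1)) := by
        simp only [Φ2, mapAlgHom_apply, MvPolynomial.map_C, eval₂_C, RingHom.coe_comp, Function.comp_apply,
          AlgHom.coe_toRingHom]
        congr 1
        show (esymAH {x // x ∈ B} k B.card) (X i) = _
        rw [esymAH, aeval_X]
      rw [h2]
      have h3 : Φ3 (C (esymm {x // x ∈ B} k ((i : ℕ) + 1)))
          = C (esymm {x // x ∈ B} k ((i : ℕ) + 1)) := by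
        show (esymAH {x // x ∈ A} R' A.card) _ = _
        rw [← algebraMap_eq, AlgHom.commutes, algebraMap_eq]
      rw [h3, step4r]
      show _ = rename (Sum.elim Subtype.val Subtype.val) (rename Sum.inr _)
      rw [rename_rename, Sum.elim_comp_inr, rename_esymm_subtype]
  rw [hchain]
  simp only [AlgHom.coe_comp]
  have i1 : Function.Injective ⇑Φ1 := by
    show Function.Injective ⇑(sumAlgEquiv k (Fin A.card) (Fin B.card)).toAlgHom
    rw [AlgEquiv.toAlgHom_eq_coe, AlgEquiv.coe_algHom]
    exact AlgEquiv.injective _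
  have i2 : Function.Injective ⇑Φ2 := by
    have h : (Φ2 : MvPolynomial (Fin A.card) (MvPolynomial (Fin B.card) k) →+*
          MvPolynomial (Fin A.card) R')
        = MvPolynomial.map ((esymAH {x // x ∈ B} k B.card : _ →ₐ[k] _) : _ →+* _) :=
      mapAlgHom_coe_ringHom _
    intro p q hpq
    exact MvPolynomial.map_injective _ (esymAH_inj _ _ _ (by rw [Fintype.card_coe]))
      (by rw [AlgHom.toRingHom_eq_coe, ← h]; exact hpq)
  have i3 : Function.Injective ⇑Φ3 := by
    show Function.Injective ⇑(esymAH {x // x ∈ A} R' A.card)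
    exact esymAH_inj _ _ _ (by rw [Fintype.card_coe])
  have i4 : Function.Injective ⇑Φ4 := by
    show Function.Injective ⇑(sumAlgEquiv k {x // x ∈ A} {x // x ∈ B}).symm.toAlgHom
    rw [AlgEquiv.toAlgHom_eq_coe, AlgEquiv.coe_algHom]
    exact AlgEquiv.injective _
  exact (rename_injective _ hiota).comp (i4.comp (i3.comp (i2.comp i1)))

lemma theta_inj (A B : Finset (Fin n)) (hAB : Disjoint A B) (a b : ℕ)
    (ha : a ≤ A.card) (hb : b ≤ B.card) :
    Function.Injective (aeval (Sum.elim (fun i : Fin a => esymS k n A ((i : ℕ) + 1))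
      (fun i : Fin b => esymS k n B ((i : ℕ) + 1))) :
      MvPolynomial (Fin a ⊕ Fin b) k →ₐ[k] MvPolynomial (Fin n) k) := by
  have hcomp : (aeval (Sum.elim (fun i : Fin a => esymS k n A ((i : ℕ) + 1))
      (fun i : Fin b => esymS k n B ((i : ℕ) + 1))) : MvPolynomial (Fin a ⊕ Fin b) k →ₐ[k] _)
      = (aeval (Sum.elim (fun i : Fin A.card => esymS k n A ((i : ℕ) + 1))
          (fun i : Fin B.card => esymS k n B ((i : ℕ) + 1)))).comp
        (rename (Sum.map (Fin.castLE ha) (Fin.castLE hb))) := by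
    apply MvPolynomial.algHom_ext
    rintro (i | i) <;>
      simp only [aeval_X, AlgHom.comp_apply, rename_X, Sum.map_inl, Sum.map_inr,
        Sum.elim_inl, Sum.elim_inr, Fin.coe_castLE]
  rw [hcomp, AlgHom.coe_comp]
  exact (theta_inj_card A B hAB).comp
    (rename_injective _ ((Fin.castLE_injective ha).sumMap (Fin.castLE_injective hb)))

noncomputable def phi (j : Fin n) : MvPolynomial (Fin n) k →ₐ[k] MvPolynomial (Fin n) k :=
  aeval (fun i => if i = j then 0 else X i)

lemma phi_esymS_of_not_mem {j : Fin n} {S : Finset (Fin n)} (hj : j ∉ S) (m : ℕ) :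
    phi (k := k) j (esymS k n S m) = esymS k n S m := by
  rw [esymS, map_sum]
  apply Finset.sum_congr rfl
  intro T hT
  rw [map_prod]
  apply Finset.prod_congr rfl
  intro i hi
  rw [phi, aeval_X, if_neg]
  rintro rfl
  exact hj ((Finset.mem_powersetCard.1 hT).1 hi)

lemma phi_esymS_erase {j : Fin n} {S : Finset (Fin n)} (hj : j ∈ S) (m : ℕ) :
    phi (k := k) j (esymS k n S m) = esymS k n (S.erase j) m := by
  classical
  rw [esymS, map_sum]
  have hsp : ∀ T ∈ S.powersetCard m,
      (phi (k := k) j) (∏ i ∈ T, X i) = if j ∈ T then 0 else ∏ i ∈ T, X i := by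
    intro T hT
    rw [map_prod]
    by_cases hjT : j ∈ T
    · rw [if_pos hjT]
      apply Finset.prod_eq_zero hjT
      rw [phi, aeval_X, if_pos rfl]
    · rw [if_neg hjT]
      apply Finset.prod_congr rfl
      intro i hi
      rw [phi, aeval_X, if_neg (by rintro rfl; exact hjT hi)]
  rw [Finset.sum_congr rfl hsp, Finset.sum_ite, Finset.sum_const_zero, zero_add]
  rw [esymS]
  apply Finset.sum_congr _ (fun _ _ => rfl)
  ext U
  simp only [Finset.mem_filter, Finset.mem_powersetCard, Finset.subset_erase]
  tauto

lemma phi_prod {j : Fin n} {B : Finset (Fin n)} (hj : j ∈ B) :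
    phi (k := k) j (∏ i ∈ B, X i) = 0 := by
  rw [map_prod]
  apply Finset.prod_eq_zero hj
  rw [phi, aeval_X, if_pos rfl]

lemma key (A B : Finset (Fin n)) (hAB : Disjoint A B) (hB : B.Nonempty)
    (p : MvPolynomial (Fin n) k)
    (hp : p ∈ (aeval (Sum.elim (fun i : Fin A.card => esymS k n A ((i : ℕ) + 1))
      (fun i : Fin (B.card - 1) => esymS k n B ((i : ℕ) + 1))) :
      MvPolynomial (Fin A.card ⊕ Fin (B.card - 1)) k →ₐ[k] _).range)
    (hdvd : (∏ i ∈ B, X i : MvPolynomial (Fin n) k) ∣ p) : p = 0 := by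
  classical
  obtain ⟨j, hj⟩ := hB
  obtain ⟨P, hP⟩ := (AlgHom.mem_range _).1 hp
  have hcomp : (phi (k := k) j).comp (aeval (Sum.elim
        (fun i : Fin A.card => esymS k n A ((i : ℕ) + 1))
        (fun i : Fin (B.card - 1) => esymS k n B ((i : ℕ) + 1))))
      = aeval (Sum.elim (fun i : Fin A.card => esymS k n A ((i : ℕ) + 1))
        (fun i : Fin (B.card - 1) => esymS k n (B.erase j) ((i : ℕ) + 1))) := by
    apply MvPolynomial.algHom_ext
    rintro (i | i) <;>
      simp only [aeval_X, AlgHom.comp_apply, Sum.elim_inl, Sum.elim_inr]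
    · exact phi_esymS_of_not_mem (Finset.disjoint_right.1 hAB hj) _
    · exact phi_esymS_erase hj _
  have hinj := theta_inj (k := k) A (B.erase j) (hAB.mono_right (Finset.erase_subset _ _))
    A.card (B.card - 1) le_rfl (le_of_eq (Finset.card_erase_of_mem hj).symm)
  obtain ⟨q, hq⟩ := hdvd
  have h0 : phi (k := k) j p = 0 := by rw [hq, map_mul, phi_prod hj, zero_mul]
  have hP0 : P = 0 := by
    apply hinj
    rw [map_zero, ← hcomp, AlgHom.comp_apply, hP, h0]
  rw [← hP, hP0, map_zero]

lemma main_general (A B : Finset (Fin n)) (hAB : Disjoint A B) (hB : B.Nonempty)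
    (f g₁ g₂ h₁ h₂ : MvPolynomial (Fin n) k)
    (hg₁ : g₁ ∈ (aeval (Sum.elim (fun i : Fin A.card => esymS k n A ((i : ℕ) + 1))
      (fun i : Fin (B.card - 1) => esymS k n B ((i : ℕ) + 1))) :
      MvPolynomial (Fin A.card ⊕ Fin (B.card - 1)) k →ₐ[k] _).range)
    (hg₂ : g₂ ∈ (aeval (Sum.elim (fun i : Fin A.card => esymS k n A ((i : ℕ) + 1))
      (fun i : Fin (B.card - 1) => esymS k n B ((i : ℕ) + 1))) :
      MvPolynomial (Fin A.card ⊕ Fin (B.card - 1)) k →ₐ[k] _).range)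
    (hdec₁ : f = g₁ + (∏ i ∈ B, X i) * h₁) (hdec₂ : f = g₂ + (∏ i ∈ B, X i) * h₂) :
    g₁ = g₂ ∧ h₁ = h₂ ∧ g₁.totalDegree ≤ f.totalDegree ∧
      (h₁ = 0 ∨ h₁.totalDegree + B.card ≤ f.totalDegree) := by
  classical
  set e : MvPolynomial (Fin n) k := ∏ i ∈ B, X i with he
  have he_ne : e ≠ 0 := by
    intro h
    have h2 := congrArg (eval (fun _ : Fin n => (1 : k))) h
    rw [map_zero, map_prod] at h2
    simp only [eval_X, Finset.prod_const_one] at h2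
    exact one_ne_zero h2
  have hehom : e.IsHomogeneous B.card := by
    have := IsHomogeneous.prod B (fun i => (X i : MvPolynomial (Fin n) k)) (fun _ => 1)
      (fun i _ => isHomogeneous_X k i)
    rwa [Finset.sum_const, smul_eq_mul, mul_one] at this
  have hsub : g₁ - g₂ = e * (h₂ - h₁) := by
    have h12 := hdec₁.symm.trans hdec₂
    rw [mul_sub]
    linear_combination h12
  have hgg0 : g₁ - g₂ = 0 := key A B hAB hB _ (Subalgebra.sub_mem _ hg₁ hg₂) ⟨h₂ - h₁, hsub⟩
  have hgeq : g₁ = g₂ := sub_eq_zero.1 hgg0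
  have hheq : h₁ = h₂ := by
    have h1 : e * (h₂ - h₁) = 0 := by rw [← hsub, hgg0]
    rcases mul_eq_zero.1 h1 with h | h
    · exact absurd h he_ne
    · exact (sub_eq_zero.1 h).symm
  have hdv : ∀ t : Fin A.card ⊕ Fin (B.card - 1),
      ((Sum.elim (fun i : Fin A.card => esymS k n A ((i : ℕ) + 1))
        (fun i : Fin (B.card - 1) => esymS k n B ((i : ℕ) + 1))) t).IsHomogeneous
        (Sum.elim (fun i : Fin A.card => (i : ℕ) + 1)
          (fun i : Fin (B.card - 1) => (i : ℕ) + 1) t) := by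
    rintro (i | i) <;> exact esymS_homog _ _
  have hzero : ∀ m : ℕ, f.totalDegree < m →
      homogeneousComponent m g₁ = 0 ∧
        (B.card ≤ m → homogeneousComponent (m - B.card) h₁ = 0) := by
    intro m hm
    have hfm : homogeneousComponent m f = 0 := homogeneousComponent_eq_zero _ _ hm
    rw [hdec₁, map_add, homogeneousComponent_mul_left hehom] at hfm
    by_cases hcm : B.card ≤ m
    · rw [if_pos hcm] at hfm
      have hg1m : homogeneousComponent m g₁ = 0 := by
        apply key A B hAB hB _ (range_comp _ _ hdv g₁ hg₁ m)
        exact ⟨-(homogeneousComponent (m - B.card) h₁), by linear_combination hfm⟩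
      refine ⟨hg1m, fun _ => ?_⟩
      have h2 : e * homogeneousComponent (m - B.card) h₁ = 0 := by
        rwa [hg1m, zero_add] at hfm
      rcases mul_eq_zero.1 h2 with h | h
      · exact absurd h he_ne
      · exact h
    · rw [if_neg hcm, add_zero] at hfm
      exact ⟨hfm, fun h => absurd h hcm⟩
  refine ⟨hgeq, hheq, ?_, ?_⟩
  · by_contra hdeg
    push_neg at hdeg
    have hne : g₁ ≠ 0 := by
      rintro rfl
      rw [totalDegree_zero] at hdeg
      exact Nat.not_lt_zero _ hdeg
    exact top_ne g₁ hne (hzero _ hdeg).1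
  · by_cases h0 : h₁ = 0
    · exact Or.inl h0
    right
    by_contra hdeg
    push_neg at hdeg
    have h2 := (hzero (h₁.totalDegree + B.card) hdeg).2 (Nat.le_add_left _ _)
    rw [Nat.add_sub_cancel] at h2
    exact top_ne h₁ h0 h2

end DecompositionAux

open DecompositionAux in
/-- Uniqueness and degree bounds for the decomposition `f = g⁺ + e·h` of a `W`-invariant
polynomial `f`, with `g⁺` in the subalgebra generated by the lower elementary
semisymmetric polynomials and `h` `W`-invariant: the decomposition is unique,
`deg g ≤ deg f` and `deg h ≤ deg f − ⌈n/2⌉`. -/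
theorem decomposition_unique (hn : 2 ≤ n)
    (f g₁ g₂ h₁ h₂ : MvPolynomial (Fin n) k)
    (hf : ∀ π : Equiv.Perm (Fin n), ParityPerm π → rename π f = f)
    (hg₁ : g₁ ∈ lowerInvariants k n) (hg₂ : g₂ ∈ lowerInvariants k n)
    (hh₁ : ∀ π : Equiv.Perm (Fin n), ParityPerm π → rename π h₁ = h₁)
    (hh₂ : ∀ π : Equiv.Perm (Fin n), ParityPerm π → rename π h₂ = h₂)
    (hdec₁ : f = g₁ + eProd k n * h₁) (hdec₂ : f = g₂ + eProd k n * h₂) :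
    g₁ = g₂ ∧ h₁ = h₂ ∧ g₁.totalDegree ≤ f.totalDegree ∧
      (h₁ = 0 ∨ h₁.totalDegree + (n + 1) / 2 ≤ f.totalDegree) := by
  classical
  have cardOdd : (oddVars n).card = (n + 1) / 2 := by
    have h1 : oddVars n = Finset.univ.filter (fun i : Fin n => ((i : ℕ) % 2 = 0)) := by
      ext i
      simp [oddVars, Nat.even_iff]
    rw [h1, card_fin_filter (fun m => m % 2 = 0), card_filter_mod_range 0 (by omega)]
    omega
  have cardEven : (evenVars n).card = n / 2 := by
    have h1 : evenVars n = Finset.univ.filter (fun i : Fin n => ((i : ℕ) % 2 = 1)) := by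
      ext i
      simp [evenVars, Nat.odd_iff]
    rw [h1, card_fin_filter (fun m => m % 2 = 1), card_filter_mod_range 1 (by omega)]
    omega
  rcases Nat.even_or_odd n with hpar | hpar
  · -- n even : B = evenVars
    have hn2 : n % 2 = 0 := Nat.even_iff.1 hpar
    have hdisj : Disjoint (oddVars n) (evenVars n) := by
      rw [Finset.disjoint_left]
      intro i hiA hiB
      rw [oddVars, Finset.mem_filter, Nat.even_iff] at hiA
      rw [evenVars, Finset.mem_filter, Nat.odd_iff] at hiB
      omega
    have hBne : (evenVars n).Nonempty := by
      refine ⟨⟨1, by omega⟩, ?_⟩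
      rw [evenVars, Finset.mem_filter]
      exact ⟨Finset.mem_univ _, by rw [Nat.odd_iff]; rfl⟩
    have hE : eProd k n = ∏ i ∈ evenVars n, X i := by
      rw [eProd]
      congr 1
      ext i
      rw [evenVars, Finset.mem_filter, Finset.mem_filter, Nat.odd_iff]
      constructor
      · rintro ⟨ha1, ha2⟩; exact ⟨ha1, by omega⟩
      · rintro ⟨ha1, ha2⟩; exact ⟨ha1, by omega⟩
    have hrange : lowerInvariants k n ≤
        (aeval (Sum.elim (fun i : Fin (oddVars n).card => esymS k n (oddVars n) ((i : ℕ) + 1))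
          (fun i : Fin ((evenVars n).card - 1) => esymS k n (evenVars n) ((i : ℕ) + 1))) :
          MvPolynomial (Fin (oddVars n).card ⊕ Fin ((evenVars n).card - 1)) k →ₐ[k] _).range := by
      rw [lowerInvariants]
      apply Algebra.adjoin_le
      rintro p ⟨hp, hpne⟩
      rw [Set.mem_singleton_iff] at hpne
      rcases hp with ⟨m, h1m, hmle, rfl⟩ | ⟨m, h1m, hmle, rfl⟩
      · refine (AlgHom.mem_range _).2 ⟨X (Sum.inl ⟨m - 1, by omega⟩), ?_⟩
        rw [aeval_X, Sum.elim_inl]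
        congr 1
        show m - 1 + 1 = m
        omega
      · have hmB : m ≠ (evenVars n).card := by
          rintro rfl
          exact hpne (by rw [hE, ← esymS_top])
        refine (AlgHom.mem_range _).2 ⟨X (Sum.inr ⟨m - 1, by omega⟩), ?_⟩
        rw [aeval_X, Sum.elim_inr]
        congr 1
        show m - 1 + 1 = m
        omega
    obtain ⟨e1, e2, e3, e4⟩ := main_general (oddVars n) (evenVars n) hdisj hBne f g₁ g₂ h₁ h₂
      (hrange hg₁) (hrange hg₂) (by rwa [hE] at hdec₁) (by rwa [hE] at hdec₂)
    refine ⟨e1, e2, e3, ?_⟩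
    have hBc : (evenVars n).card = (n + 1) / 2 := by rw [cardEven]; omega
    rwa [hBc] at e4
  · -- n odd : B = oddVars
    have hn2 : n % 2 = 1 := Nat.odd_iff.1 hpar
    have hdisj : Disjoint (evenVars n) (oddVars n) := by
      rw [Finset.disjoint_left]
      intro i hiA hiB
      rw [evenVars, Finset.mem_filter, Nat.odd_iff] at hiA
      rw [oddVars, Finset.mem_filter, Nat.even_iff] at hiB
      omega
    have hBne : (oddVars n).Nonempty := by
      refine ⟨⟨0, by omega⟩, ?_⟩
      rw [oddVars, Finset.mem_filter]
      exact ⟨Finset.mem_univ _, by rw [Nat.even_iff]; rfl⟩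
    have hE : eProd k n = ∏ i ∈ oddVars n, X i := by
      rw [eProd]
      congr 1
      ext i
      rw [oddVars, Finset.mem_filter, Finset.mem_filter, Nat.even_iff]
      constructor
      · rintro ⟨ha1, ha2⟩; exact ⟨ha1, by omega⟩
      · rintro ⟨ha1, ha2⟩; exact ⟨ha1, by omega⟩
    have hrange : lowerInvariants k n ≤
        (aeval (Sum.elim (fun i : Fin (evenVars n).card => esymS k n (evenVars n) ((i : ℕ) + 1))
          (fun i : Fin ((oddVars n).card - 1) => esymS k n (oddVars n) ((i : ℕ) + 1))) :
          MvPolynomial (Fin (evenVars n).card ⊕ Fin ((oddVars n).card - 1)) k →ₐ[k] _).range := by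
      rw [lowerInvariants]
      apply Algebra.adjoin_le
      rintro p ⟨hp, hpne⟩
      rw [Set.mem_singleton_iff] at hpne
      rcases hp with ⟨m, h1m, hmle, rfl⟩ | ⟨m, h1m, hmle, rfl⟩
      · have hmB : m ≠ (oddVars n).card := by
          rintro rfl
          exact hpne (by rw [hE, ← esymS_top])
        refine (AlgHom.mem_range _).2 ⟨X (Sum.inr ⟨m - 1, by omega⟩), ?_⟩
        rw [aeval_X, Sum.elim_inr]
        congr 1
        show m - 1 + 1 = m
        omega
      · refine (AlgHom.mem_range _).2 ⟨X (Sum.inl ⟨m - 1, by omega⟩), ?_⟩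
        rw [aeval_X, Sum.elim_inl]
        congr 1
        show m - 1 + 1 = m
        omega
    obtain ⟨e1, e2, e3, e4⟩ := main_general (evenVars n) (oddVars n) hdisj hBne f g₁ g₂ h₁ h₂
      (hrange hg₁) (hrange hg₂) (by rwa [hE] at hdec₁) (by rwa [hE] at hdec₂)
    exact ⟨e1, e2, e3, by rwa [cardOdd] at e4⟩
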